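/- Let p be a prime and R a set of residues modulo p with |R| = s ≥ 1, and let L = {l ≥ 0 : l mod p ∈ R}. Then for every finite simple graph G that admits an L-intersection representation, mr_{ℤ_p}(G^c) ≤ Σ_{t=0}^{s} C(Θ_L(G), t). -/

import Mathlib

open Finset Polynomial Matrix Module

lemma cast_descFactorial_prod {F : Type*} [CommRing F] (n : ℕ) :
    ∀ k : ℕ, ((n.descFactorial k : ℕ) : F) = ∏ i ∈ Finset.range k, ((n : F) - i) := by
  intro k
  induction k with
  | zero => simp
  | succ k ih =>
    rw [Finset.prod_range_succ, ← ih]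
    by_cases h : k ≤ n
    · rw [Nat.descFactorial_succ, Nat.cast_mul, mul_comm]
      congr 1
      push_cast [h]
      ring
    · push_neg at h
      have h1 : n.descFactorial (k+1) = 0 := Nat.descFactorial_eq_zero_iff_lt.mpr (by omega)
      have h2 : n.descFactorial k = 0 := Nat.descFactorial_eq_zero_iff_lt.mpr h
      simp [h1, h2]

lemma poly_binom_expand {F : Type*} [CommRing F] [Nontrivial F] :
    ∀ (d : ℕ) (q : Polynomial F), q.natDegree ≤ d →
    ∃ c : ℕ → F, ∀ n : ℕ, q.eval (n : F) =
      ∑ t ∈ Finset.range (d + 1), c t * (n.choose t : F) := by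
  intro d
  induction d with
  | zero =>
    intro q hq
    refine ⟨fun _ => q.coeff 0, fun n => ?_⟩
    rw [eq_C_of_natDegree_le_zero hq]
    simp
  | succ d ih =>
    intro q hq
    set a := q.coeff (d+1) with ha
    set P : Polynomial F := ∏ i ∈ Finset.range (d+1), (X - C (i : F)) with hP
    have hPm : P.Monic := monic_prod_of_monic _ _ fun i _ => monic_X_sub_C _
    have hPdeg : P.natDegree = d + 1 := by
      have hd : ∀ i ∈ Finset.range (d+1), (X - C (i:F)).natDegree = 1 :=
        fun i _ => natDegree_X_sub_C _
      rw [hP, natDegree_prod_of_monic _ _ fun i _ => monic_X_sub_C _,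
        Finset.sum_congr rfl hd]
      simp
    set q' : Polynomial F := q - C a * P with hq'
    have hdeg' : q'.natDegree ≤ d := by
      rw [natDegree_le_iff_coeff_eq_zero]
      intro N hN
      rw [hq', coeff_sub, coeff_C_mul]
      rcases eq_or_lt_of_le (Nat.succ_le_of_lt hN) with h | h
      · have hc1 : P.coeff (d+1) = 1 := by
          have := hPm.coeff_natDegree
          rwa [hPdeg] at this
        rw [← h]
        simp only [Nat.succ_eq_add_one]
        rw [hc1, mul_one, ← ha, sub_self]
      · rw [coeff_eq_zero_of_natDegree_lt (lt_of_le_of_lt hq h),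
          coeff_eq_zero_of_natDegree_lt (by rw [hPdeg]; exact h), mul_zero, sub_zero]
    obtain ⟨c', hc'⟩ := ih q' hdeg'
    refine ⟨fun t => if t = d + 1 then a * (Nat.factorial (d+1) : F) else c' t, fun n => ?_⟩
    have hPev : P.eval (n : F) = ((Nat.factorial (d+1)) : F) * (n.choose (d+1) : F) := by
      rw [hP]
      simp only [eval_prod, eval_sub, eval_X, eval_C]
      rw [← cast_descFactorial_prod, Nat.descFactorial_eq_factorial_mul_choose]
      push_cast
      ring
    have hsplit : q.eval (n : F) = q'.eval (n : F) + a * P.eval (n : F) := by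
      rw [hq', eval_sub, eval_mul, eval_C]; ring
    rw [hsplit, hc' n]
    conv_rhs => rw [Finset.sum_range_succ]
    have : ∀ t ∈ Finset.range (d+1),
        (if t = d + 1 then a * ((Nat.factorial (d+1)) : F) else c' t) * (n.choose t : F)
          = c' t * (n.choose t : F) := by
      intro t ht
      rw [Finset.mem_range] at ht
      rw [if_neg (by omega)]
    rw [Finset.sum_congr rfl this, hPev]
    beta_reduce
    rw [if_pos rfl]
    push_cast
    ring

lemma matrix_rank_add_le {F : Type*} [Field F] {m n : Type*} [Fintype n] [DecidableEq n]
    (A B : Matrix m n F) : (A + B).rank ≤ A.rank + B.rank := by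
  classical
  rw [Matrix.rank, Matrix.rank, Matrix.rank, Matrix.mulVecLin_add]
  have hle : LinearMap.range (A.mulVecLin + B.mulVecLin) ≤
      LinearMap.range A.mulVecLin ⊔ LinearMap.range B.mulVecLin := by
    rintro x ⟨y, rfl⟩
    exact Submodule.mem_sup.mpr ⟨A.mulVecLin y, ⟨y, rfl⟩, B.mulVecLin y, ⟨y, rfl⟩, rfl⟩
  calc finrank F (LinearMap.range (A.mulVecLin + B.mulVecLin))
      ≤ finrank F ((LinearMap.range A.mulVecLin) ⊔ (LinearMap.range B.mulVecLin) : Submodule F (m → F)) :=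
        Submodule.finrank_mono hle
    _ ≤ _ := Submodule.finrank_add_le_finrank_add_finrank _ _

lemma rank_vecMulVec_le_one {F : Type*} [Field F] {V : Type*} [Fintype V]
    (w v : V → F) : (Matrix.vecMulVec w v).rank ≤ 1 := by
  classical
  rw [Matrix.vecMulVec_eq (Fin 1)]
  exact (Matrix.rank_mul_le_left _ _).trans
    ((Matrix.rank_le_card_width _).trans (by simp))

lemma rank_sum_le_card {F : Type*} [Field F] {V : Type*} [Fintype V] [DecidableEq V]
    {ι : Type*} [DecidableEq ι] (I : Finset ι) (f : ι → Matrix V V F)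
    (h : ∀ i ∈ I, (f i).rank ≤ 1) : (∑ i ∈ I, f i).rank ≤ I.card := by
  classical
  induction I using Finset.induction_on with
  | empty => simp [Matrix.rank_zero]
  | insert _ _ hi ih =>
    rename_i a I'
    rw [Finset.sum_insert hi, Finset.card_insert_of_notMem hi]
    calc (f a + ∑ i ∈ I', f i).rank ≤ (f a).rank + (∑ i ∈ I', f i).rank :=
          matrix_rank_add_le _ _
      _ ≤ 1 + I'.card := add_le_add (h a (Finset.mem_insert_self _ _))
          (ih fun i hi' => h i (Finset.mem_insert_of_mem hi'))
      _ = I'.card + 1 := by omega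




/-- An `L`-intersection representation of `G` with universe `Fin l`: two distinct vertices are
adjacent iff the size of the intersection of their assigned sets lies in `L`. -/
def IsLRep {V : Type*} {l : ℕ} (G : SimpleGraph V) (L : Set ℕ) (A : V → Finset (Fin l)) : Prop :=
  ∀ u v : V, u ≠ v → (G.Adj u v ↔ (A u ∩ A v).card ∈ L)

/-- `G` has an `L`-intersection representation on a universe of size `l`. -/
def HasLRep {V : Type*} (G : SimpleGraph V) (L : Set ℕ) (l : ℕ) : Prop :=
  ∃ A : V → Finset (Fin l), IsLRep G L A

/-- The `L`-intersection number `Θ_L(G)`. -/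
noncomputable def thetaL {V : Type*} (G : SimpleGraph V) (L : Set ℕ) : ℕ :=
  sInf {l | HasLRep G L l}

/-- The minimum rank of a graph `G` over a field `F`: the minimum rank of a symmetric matrix
over `F` whose off-diagonal entries are nonzero exactly at the edges of `G`
(diagonal entries are arbitrary). -/
noncomputable def minRank (F : Type*) [Field F] {V : Type*} [Fintype V] (G : SimpleGraph V) : ℕ :=
  sInf {r | ∃ A : Matrix V V F, A.IsSymm ∧
    (∀ u v : V, u ≠ v → (A u v ≠ 0 ↔ G.Adj u v)) ∧ A.rank = r}


/-- Let `p` be a prime, `R` a set of residues mod `p` with `|R| = s ≥ 1`, and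
`L = {l ≥ 0 : l mod p ∈ R}`. Then every finite simple graph `G` admitting an `L`-intersection
representation satisfies `mr_{ℤ_p}(Gᶜ) ≤ Σ_{t=0}^{s} C(Θ_L(G), t)`. -/
theorem minRank_compl_le_sum_choose {V : Type*} [Fintype V]
    (p : ℕ) [hp : Fact p.Prime] (R : Finset (ZMod p)) (s : ℕ) (hs : 1 ≤ s) (hR : R.card = s)
    (L : Set ℕ) (hL : L = {m : ℕ | (m : ZMod p) ∈ R})
    (G : SimpleGraph V) (hrep : ∃ l, HasLRep G L l) :
    minRank (ZMod p) Gᶜ ≤ ∑ t ∈ Finset.range (s + 1), (thetaL G L).choose t := by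
  classical
  have hne : {l | HasLRep G L l}.Nonempty := hrep
  set θ := thetaL G L with hθdef
  obtain ⟨Arep, hArep⟩ : HasLRep G L θ := Nat.sInf_mem hne
  set q : Polynomial (ZMod p) := ∏ r ∈ R, (Polynomial.X - Polynomial.C r) with hq
  have hqdeg : q.natDegree ≤ s := by
    have hd : ∀ r ∈ R, (Polynomial.X - Polynomial.C r).natDegree = 1 :=
      fun r _ => Polynomial.natDegree_X_sub_C r
    rw [hq, Polynomial.natDegree_prod_of_monic _ _ fun r _ => Polynomial.monic_X_sub_C r,
      Finset.sum_congr rfl hd]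
    simp [hR]
  obtain ⟨c, hc⟩ := poly_binom_expand s q hqdeg
  set w : Finset (Fin θ) → V → ZMod p := fun S u => if S ⊆ Arep u then 1 else 0 with hw
  set 𝒮 : Finset (Finset (Fin θ)) := Finset.univ.filter (fun S => S.card ≤ s) with hSdef
  set M : Matrix V V (ZMod p) :=
    ∑ S ∈ 𝒮, Matrix.vecMulVec (c S.card • w S) (w S) with hM
  have hMentry : ∀ u v : V, M u v = q.eval (((Arep u ∩ Arep v).card : ℕ) : ZMod p) := by
    intro u v
    have h1 : M u v = ∑ S ∈ 𝒮, c S.card * (w S u * w S v) := by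
      rw [hM, Matrix.sum_apply]
      refine Finset.sum_congr rfl fun S _ => ?_
      rw [Matrix.vecMulVec_apply, Pi.smul_apply, smul_eq_mul, mul_assoc]
    have h2 : ∀ t : ℕ,
        ∑ S ∈ Finset.univ.filter (fun S : Finset (Fin θ) => S.card = t), (w S u * w S v)
          = (((Arep u ∩ Arep v).card.choose t : ℕ) : ZMod p) := by
      intro t
      have hww : ∀ S : Finset (Fin θ),
          w S u * w S v = if S ⊆ Arep u ∩ Arep v then (1 : ZMod p) else 0 := by
        intro S
        rw [hw]
        by_cases h1 : S ⊆ Arep u <;> by_cases h2 : S ⊆ Arep v <;>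
          simp [h1, h2, Finset.subset_inter_iff]
      simp only [hww]
      rw [Finset.sum_boole]
      have hfil : (Finset.univ.filter (fun S : Finset (Fin θ) => S.card = t)).filter
            (fun S => S ⊆ Arep u ∩ Arep v) = Finset.powersetCard t (Arep u ∩ Arep v) := by
        ext S
        simp [Finset.mem_powersetCard, and_comm]
      rw [hfil, Finset.card_powersetCard]
    calc M u v = ∑ S ∈ 𝒮, c S.card * (w S u * w S v) := h1
      _ = ∑ t ∈ Finset.range (s+1),
            ∑ S ∈ 𝒮.filter (fun S => S.card = t), c S.card * (w S u * w S v) :=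
        (Finset.sum_fiberwise_of_maps_to (fun S hS => by
          rw [hSdef] at hS
          simp only [Finset.mem_filter] at hS
          exact Finset.mem_range.mpr (Nat.lt_succ_of_le hS.2)) _).symm
      _ = ∑ t ∈ Finset.range (s+1), c t * (((Arep u ∩ Arep v).card.choose t : ℕ) : ZMod p) := by
        refine Finset.sum_congr rfl fun t ht => ?_
        rw [Finset.mem_range] at ht
        have hfil : 𝒮.filter (fun S => S.card = t)
            = Finset.univ.filter (fun S : Finset (Fin θ) => S.card = t) := by
          rw [hSdef, Finset.filter_filter]
          ext S
          simp only [Finset.mem_filter, Finset.mem_univ, true_and]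
          omega
        rw [hfil, ← h2 t, Finset.mul_sum]
        refine Finset.sum_congr rfl fun S hS => ?_
        simp only [Finset.mem_filter] at hS
        rw [hS.2]
      _ = q.eval (((Arep u ∩ Arep v).card : ℕ) : ZMod p) := (hc _).symm
  have hsym : M.IsSymm := by
    show Mᵀ = M
    ext u v
    rw [Matrix.transpose_apply, hMentry, hMentry, Finset.inter_comm]
  have hoff : ∀ u v : V, u ≠ v → (M u v ≠ 0 ↔ Gᶜ.Adj u v) := by
    intro u v huv
    have hval : M u v = ∏ r ∈ R, ((((Arep u ∩ Arep v).card : ℕ) : ZMod p) - r) := by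
      rw [hMentry, hq, Polynomial.eval_prod]
      simp
    have hz : M u v = 0 ↔ (((Arep u ∩ Arep v).card : ℕ) : ZMod p) ∈ R := by
      rw [hval, Finset.prod_eq_zero_iff]
      constructor
      · rintro ⟨r, hr, h0⟩
        rw [sub_eq_zero] at h0
        rwa [h0]
      · intro h
        exact ⟨_, h, sub_self _⟩
    have hmem : (((Arep u ∩ Arep v).card : ℕ) : ZMod p) ∈ R ↔ (Arep u ∩ Arep v).card ∈ L := by
      rw [hL]; exact Iff.rfl
    rw [SimpleGraph.compl_adj]
    constructor
    · intro hne0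
      refine ⟨huv, fun hadj => hne0 ?_⟩
      rw [hz, hmem]
      exact (hArep u v huv).mp hadj
    · rintro ⟨-, hnadj⟩ h0
      exact hnadj ((hArep u v huv).mpr (hmem.mp (hz.mp h0)))
  have hrank : M.rank ≤ 𝒮.card := by
    rw [hM]
    exact rank_sum_le_card 𝒮 _ fun S _ => rank_vecMulVec_le_one _ _
  have hcard : 𝒮.card = ∑ t ∈ Finset.range (s+1), θ.choose t := by
    rw [Finset.card_eq_sum_card_fiberwise (f := Finset.card) (t := Finset.range (s+1))
      (fun S hS => by
        rw [hSdef] at hS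
        simp only [Finset.mem_coe, Finset.mem_filter] at hS
        exact Finset.mem_range.mpr (Nat.lt_succ_of_le hS.2))]
    refine Finset.sum_congr rfl fun t ht => ?_
    rw [Finset.mem_range] at ht
    have hfil : 𝒮.filter (fun S => S.card = t)
        = Finset.powersetCard t (Finset.univ : Finset (Fin θ)) := by
      rw [hSdef, Finset.filter_filter]
      ext S
      simp only [Finset.mem_filter, Finset.mem_univ, true_and, Finset.mem_powersetCard,
        Finset.subset_univ]
      omega
    rw [hfil, Finset.card_powersetCard, Finset.card_univ, Fintype.card_fin]
  have hmin : minRank (ZMod p) Gᶜ ≤ M.rank :=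
    Nat.sInf_le ⟨M, hsym, hoff, rfl⟩
  calc minRank (ZMod p) Gᶜ ≤ M.rank := hmin
    _ ≤ 𝒮.card := hrank
    _ = ∑ t ∈ Finset.range (s+1), θ.choose t := hcard
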